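/- Let x \in Mat_n(\mathbb{C}(q)) \otimes Mat_n(\mathbb{C}(q)) and define x_{q^{-1}} by substituting q^{-1} for q, and x^T by transposing both tensor factors. Suppose R_1, R_2 satisfy R_1 - (R_2)^T_{q^{-1}} = (q - q^{-1}) P where P is the flip, and suppose P R_2^T_{q^{-1}} = (P R_1)^{-1}. Then R_2^T_{q^{-1}} = ((R_1)^{-1})^{21}, and R_1 satisfies the quantum Yang-Baxter equation if and only if R_2 does. -/

import Mathlib

set_option synthInstance.maxHeartbeats 1000000

open Matrix Kronecker

/-- `R ⊗ 1`, acting on factors 1 and 2 of a triple tensor product. -/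
def lift12 {K : Type*} [Semiring K] {n : ℕ}
    (R : Matrix (Fin n × Fin n) (Fin n × Fin n) K) :
    Matrix (Fin n × Fin n × Fin n) (Fin n × Fin n × Fin n) K :=
  Matrix.of fun p q => R (p.1, p.2.1) (q.1, q.2.1) * (if p.2.2 = q.2.2 then 1 else 0)

/-- `R` acting on factors 1 and 3 of a triple tensor product. -/
def lift13 {K : Type*} [Semiring K] {n : ℕ}
    (R : Matrix (Fin n × Fin n) (Fin n × Fin n) K) :
    Matrix (Fin n × Fin n × Fin n) (Fin n × Fin n × Fin n) K :=
  Matrix.of fun p q => R (p.1, p.2.2) (q.1, q.2.2) * (if p.2.1 = q.2.1 then 1 else 0)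

/-- `1 ⊗ R`, acting on factors 2 and 3 of a triple tensor product. -/
def lift23 {K : Type*} [Semiring K] {n : ℕ}
    (R : Matrix (Fin n × Fin n) (Fin n × Fin n) K) :
    Matrix (Fin n × Fin n × Fin n) (Fin n × Fin n × Fin n) K :=
  Matrix.of fun p q => (if p.1 = q.1 then 1 else 0) * R (p.2.1, p.2.2) (q.2.1, q.2.2)

/-- The quantum Yang–Baxter equation `R¹² R¹³ R²³ = R²³ R¹³ R¹²`. -/
def QYBE {K : Type*} [Semiring K] {n : ℕ}
    (R : Matrix (Fin n × Fin n) (Fin n × Fin n) K) : Prop :=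
  lift12 R * lift13 R * lift23 R = lift23 R * lift13 R * lift12 R

/-- The flip `x ↦ x²¹` of the two tensor factors. -/
def flip21 {K : Type*} {n : ℕ} (x : Matrix (Fin n × Fin n) (Fin n × Fin n) K) :
    Matrix (Fin n × Fin n) (Fin n × Fin n) K :=
  Matrix.of fun p q => x (p.2, p.1) (q.2, q.1)

/-- The flip operator `P = ∑_{i,j} e_{ij} ⊗ e_{ji}` over `ℂ(q)`. -/
noncomputable def Pflip (n : ℕ) : Matrix (Fin n × Fin n) (Fin n × Fin n) (RatFunc ℂ) :=
  ∑ i : Fin n, ∑ j : Fin n,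
    single i j (1 : RatFunc ℂ) ⊗ₖ single j i (1 : RatFunc ℂ)

section Aux

variable {K : Type*} [Field K] {n : ℕ}
variable (X Y : Matrix (Fin n × Fin n) (Fin n × Fin n) K)

private lemma lift12_mul : lift12 (X*Y) = lift12 X * lift12 Y := by
  ext ⟨a,b,c⟩ ⟨d,e,f⟩
  simp [lift12, Matrix.mul_apply, Fintype.sum_prod_type, mul_ite, ite_mul, mul_zero, zero_mul,
    Finset.sum_ite_eq, Finset.sum_ite_eq', Finset.sum_mul, Finset.mul_sum]

private lemma lift13_mul : lift13 (X*Y) = lift13 X * lift13 Y := by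
  ext ⟨a,b,c⟩ ⟨d,e,f⟩
  simp [lift13, Matrix.mul_apply, Fintype.sum_prod_type, mul_ite, ite_mul, mul_zero, zero_mul,
    Finset.sum_ite_eq, Finset.sum_ite_eq', Finset.sum_mul, Finset.mul_sum]

private lemma lift23_mul : lift23 (X*Y) = lift23 X * lift23 Y := by
  ext ⟨a,b,c⟩ ⟨d,e,f⟩
  simp [lift23, Matrix.mul_apply, Fintype.sum_prod_type, mul_ite, ite_mul, mul_zero, zero_mul,
    Finset.sum_ite_eq, Finset.sum_ite_eq', Finset.sum_mul, Finset.mul_sum]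

private lemma lift12_one : lift12 (1 : Matrix (Fin n × Fin n) _ K) = 1 := by
  ext ⟨a,b,c⟩ ⟨d,e,f⟩
  simp [lift12, Matrix.one_apply, Prod.ext_iff, ite_and]
  split_ifs <;> rfl

private lemma lift13_one : lift13 (1 : Matrix (Fin n × Fin n) _ K) = 1 := by
  ext ⟨a,b,c⟩ ⟨d,e,f⟩
  simp [lift13, Matrix.one_apply, Prod.ext_iff, ite_and]
  split_ifs <;> rfl

private lemma lift23_one : lift23 (1 : Matrix (Fin n × Fin n) _ K) = 1 := by
  ext ⟨a,b,c⟩ ⟨d,e,f⟩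
  simp [lift23, Matrix.one_apply, Prod.ext_iff, ite_and]
  split_ifs <;> rfl

private lemma flip21_eq :
    flip21 X = X.submatrix (Equiv.prodComm (Fin n) (Fin n)) (Equiv.prodComm (Fin n) (Fin n)) := rfl

private lemma flip21_mul : flip21 (X * Y) = flip21 X * flip21 Y := by
  simp only [flip21_eq]
  rw [Matrix.submatrix_mul_equiv]

private lemma flip21_one : flip21 (1 : Matrix (Fin n × Fin n) _ K) = 1 := by
  ext ⟨a,b⟩ ⟨c,d⟩
  simp [flip21, Matrix.one_apply, Prod.ext_iff, and_comm]

private lemma flip21_flip21 : flip21 (flip21 X) = X := rfl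

private def rho (n : ℕ) : (Fin n × Fin n × Fin n) ≃ (Fin n × Fin n × Fin n) where
  toFun p := (p.2.2, p.2.1, p.1)
  invFun p := (p.2.2, p.2.1, p.1)
  left_inv := fun ⟨_,_,_⟩ => rfl
  right_inv := fun ⟨_,_,_⟩ => rfl

private lemma lift12_sub : (lift12 X).submatrix (rho n) (rho n) = lift23 (flip21 X) := by
  ext ⟨a,b,c⟩ ⟨d,e,f⟩
  simp [lift12, lift23, flip21, rho, mul_comm]

private lemma lift13_sub : (lift13 X).submatrix (rho n) (rho n) = lift13 (flip21 X) := by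
  ext ⟨a,b,c⟩ ⟨d,e,f⟩
  simp [lift13, flip21, rho, mul_comm]

private lemma lift23_sub : (lift23 X).submatrix (rho n) (rho n) = lift12 (flip21 X) := by
  ext ⟨a,b,c⟩ ⟨d,e,f⟩
  simp [lift12, lift23, flip21, rho, mul_comm]

private lemma lift12_transpose : lift12 Xᵀ = (lift12 X)ᵀ := by
  ext ⟨a,b,c⟩ ⟨d,e,f⟩; simp [lift12, eq_comm]

private lemma lift13_transpose : lift13 Xᵀ = (lift13 X)ᵀ := by
  ext ⟨a,b,c⟩ ⟨d,e,f⟩; simp [lift13, eq_comm]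

private lemma lift23_transpose : lift23 Xᵀ = (lift23 X)ᵀ := by
  ext ⟨a,b,c⟩ ⟨d,e,f⟩; simp [lift23, eq_comm, mul_comm]

private lemma lift12_map (f : K →+* K) : lift12 (X.map f) = (lift12 X).map f := by
  ext ⟨a,b,c⟩ ⟨d,e,f'⟩
  simp only [lift12, Matrix.map_apply, Matrix.of_apply]; split_ifs <;> simp

private lemma lift13_map (f : K →+* K) : lift13 (X.map f) = (lift13 X).map f := by
  ext ⟨a,b,c⟩ ⟨d,e,f'⟩
  simp only [lift13, Matrix.map_apply, Matrix.of_apply]; split_ifs <;> simp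

private lemma lift23_map (f : K →+* K) : lift23 (X.map f) = (lift23 X).map f := by
  ext ⟨a,b,c⟩ ⟨d,e,f'⟩
  simp only [lift23, Matrix.map_apply, Matrix.of_apply]; split_ifs <;> simp

private lemma submatrix_mul_rho (M N : Matrix (Fin n × Fin n × Fin n) (Fin n × Fin n × Fin n) K) :
    (M * N).submatrix (rho n) (rho n) = M.submatrix (rho n) (rho n) * N.submatrix (rho n) (rho n) :=
  (Matrix.submatrix_mul_equiv M N (rho n) (rho n) (rho n)).symm

variable {X Y}

private lemma qybe_transpose (h : QYBE X) : QYBE Xᵀ := by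
  unfold QYBE at h ⊢
  rw [lift12_transpose, lift13_transpose, lift23_transpose,
    ← Matrix.transpose_mul, ← Matrix.transpose_mul, ← Matrix.transpose_mul, ← Matrix.transpose_mul]
  exact congrArg Matrix.transpose (by rw [← mul_assoc, ← mul_assoc]; exact h.symm)

private lemma qybe_transpose_iff : QYBE Xᵀ ↔ QYBE X := by
  constructor
  · intro h; simpa using qybe_transpose h
  · exact qybe_transpose

private lemma qybe_map (f : K →+* K) (h : QYBE X) : QYBE (X.map f) := by
  unfold QYBE at h ⊢
  rw [lift12_map, lift13_map, lift23_map, ← Matrix.map_mul, ← Matrix.map_mul,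
    ← Matrix.map_mul, ← Matrix.map_mul]
  exact congrArg (Matrix.map · f) h

private lemma qybe_map_iff (f : K →+* K) (hf : Function.Injective f) :
    QYBE (X.map f) ↔ QYBE X := by
  refine ⟨fun h => ?_, qybe_map f⟩
  unfold QYBE at h ⊢
  rw [lift12_map, lift13_map, lift23_map, ← Matrix.map_mul, ← Matrix.map_mul,
    ← Matrix.map_mul, ← Matrix.map_mul] at h
  exact Matrix.map_injective hf h

private lemma flip21_inv (hX : IsUnit X) : (flip21 X)⁻¹ = flip21 X⁻¹ :=
  Matrix.inv_eq_right_inv (by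
    rw [← flip21_mul, Matrix.mul_nonsing_inv _ ((Matrix.isUnit_iff_isUnit_det _).mp hX),
      flip21_one])

private lemma isUnit_flip21 (hX : IsUnit X) : IsUnit (flip21 X) := by
  rw [Matrix.isUnit_iff_isUnit_det]
  refine IsUnit.of_mul_eq_one (flip21 X⁻¹).det ?_
  rw [← Matrix.det_mul, ← flip21_mul,
    Matrix.mul_nonsing_inv _ ((Matrix.isUnit_iff_isUnit_det _).mp hX), flip21_one, Matrix.det_one]

private lemma qybe_flip_inv (hX : IsUnit X) (h : QYBE X) : QYBE (flip21 X⁻¹) := by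
  have hdet := (Matrix.isUnit_iff_isUnit_det _).mp hX
  have hXi : X * X⁻¹ = 1 := Matrix.mul_nonsing_inv _ hdet
  have inv12 : (lift12 X)⁻¹ = lift12 X⁻¹ :=
    Matrix.inv_eq_right_inv (by rw [← lift12_mul, hXi, lift12_one])
  have inv13 : (lift13 X)⁻¹ = lift13 X⁻¹ :=
    Matrix.inv_eq_right_inv (by rw [← lift13_mul, hXi, lift13_one])
  have inv23 : (lift23 X)⁻¹ = lift23 X⁻¹ :=
    Matrix.inv_eq_right_inv (by rw [← lift23_mul, hXi, lift23_one])
  have h' := congrArg Inv.inv h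
  rw [Matrix.mul_inv_rev, Matrix.mul_inv_rev, Matrix.mul_inv_rev, Matrix.mul_inv_rev,
    inv12, inv13, inv23] at h'
  -- h' : lift23 X⁻¹ * (lift13 X⁻¹ * lift12 X⁻¹) = lift12 X⁻¹ * (lift13 X⁻¹ * lift23 X⁻¹)
  unfold QYBE
  rw [← lift23_sub, ← lift13_sub, ← lift12_sub, ← submatrix_mul_rho, ← submatrix_mul_rho,
    ← submatrix_mul_rho, ← submatrix_mul_rho]
  exact congrArg (fun M : Matrix (Fin n × Fin n × Fin n) (Fin n × Fin n × Fin n) K =>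
      Matrix.submatrix M (rho n) (rho n))
    (by rw [mul_assoc, mul_assoc]; exact h')

private lemma qybe_flip_inv_iff (hX : IsUnit X) : QYBE (flip21 X⁻¹) ↔ QYBE X := by
  have hdet := (Matrix.isUnit_iff_isUnit_det _).mp hX
  constructor
  · intro h
    have hT : IsUnit (flip21 X⁻¹) := isUnit_flip21 (Matrix.isUnit_nonsing_inv_iff.mpr hX)
    have h2 := qybe_flip_inv hT h
    rwa [flip21_inv (Matrix.isUnit_nonsing_inv_iff.mpr hX),
      Matrix.nonsing_inv_nonsing_inv _ hdet, flip21_flip21] at h2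
  · exact qybe_flip_inv hX

private lemma Pflip_apply {n : ℕ} (p q : Fin n × Fin n) :
    Pflip n p q = if p.1 = q.2 ∧ p.2 = q.1 then 1 else 0 := by
  simp [Pflip, Matrix.sum_apply, Matrix.single, ite_and,
    Finset.sum_ite_eq, Finset.sum_ite_eq', mul_ite, ite_mul, mul_zero, zero_mul, eq_comm]

private lemma Pflip_mul {n : ℕ} (Z : Matrix (Fin n × Fin n) (Fin n × Fin n) (RatFunc ℂ)) :
    Pflip n * Z = Matrix.of fun p q => Z (p.2, p.1) q := by
  ext ⟨a,b⟩ q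
  simp [Matrix.mul_apply, Pflip_apply, Fintype.sum_prod_type, ite_and,
    Finset.sum_ite_eq, Finset.sum_ite_eq', mul_ite, ite_mul, mul_zero, zero_mul]

private lemma mul_Pflip {n : ℕ} (Z : Matrix (Fin n × Fin n) (Fin n × Fin n) (RatFunc ℂ)) :
    Z * Pflip n = Matrix.of fun p q => Z p (q.2, q.1) := by
  ext p ⟨c,d⟩
  simp [Matrix.mul_apply, Pflip_apply, Fintype.sum_prod_type, ite_and,
    Finset.sum_ite_eq, Finset.sum_ite_eq', mul_ite, ite_mul, mul_zero, zero_mul]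

private lemma Pflip_Pflip {n : ℕ} : Pflip n * Pflip n = (1 : Matrix (Fin n × Fin n) _ _) := by
  rw [Pflip_mul]
  ext ⟨a,b⟩ ⟨c,d⟩
  simp [Pflip_apply, Matrix.one_apply, Prod.ext_iff, and_comm]

end Aux

/-- Equivalence of the two formulations of the GGS matrix.  Let `σ : ℂ(q) → ℂ(q)` be
the substitution `q ↦ q⁻¹`, applied entrywise, and `ᵀ` the transposition of both
tensor factors.  If `R₁ - (R₂)ᵀ_{q⁻¹} = (q - q⁻¹)P` and
`P·(R₂)ᵀ_{q⁻¹} = (P·R₁)⁻¹` (with `P·R₁` invertible), then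
`(R₂)ᵀ_{q⁻¹} = (R₁⁻¹)²¹`, and `R₁` satisfies the QYBE iff `R₂` does. -/
theorem ggs_formulations_equiv (n : ℕ) (σ : RatFunc ℂ →+* RatFunc ℂ)
    (hσ : σ RatFunc.X = (RatFunc.X : RatFunc ℂ)⁻¹)
    (R1 R2 : Matrix (Fin n × Fin n) (Fin n × Fin n) (RatFunc ℂ))
    (h1 : R1 - (R2.transpose).map σ =
      (RatFunc.X - (RatFunc.X : RatFunc ℂ)⁻¹) • Pflip n)
    (hU : IsUnit (Pflip n * R1))
    (h2 : Pflip n * (R2.transpose).map σ = (Pflip n * R1)⁻¹) :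
    (R2.transpose).map σ = flip21 R1⁻¹ ∧ (QYBE R1 ↔ QYBE R2) := by
  set S := (R2.transpose).map σ with hS
  have hPP : Pflip n * Pflip n = 1 := Pflip_Pflip
  have hPinv : (Pflip n)⁻¹ = Pflip n := Matrix.inv_eq_right_inv hPP
  have hR1 : IsUnit R1 := by
    have hd := (Matrix.isUnit_iff_isUnit_det _).mp hU
    rw [Matrix.det_mul] at hd
    exact (Matrix.isUnit_iff_isUnit_det _).mpr (isUnit_of_mul_isUnit_right hd)
  have hconj : ∀ Z : Matrix (Fin n × Fin n) (Fin n × Fin n) (RatFunc ℂ),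
      flip21 Z = Pflip n * Z * Pflip n := by
    intro Z; rw [Pflip_mul, mul_Pflip]; rfl
  have h2' : Pflip n * S = R1⁻¹ * Pflip n := by rw [h2, Matrix.mul_inv_rev, hPinv]
  have key : S = flip21 R1⁻¹ := by
    calc S = Pflip n * (Pflip n * S) := by rw [← mul_assoc, hPP, one_mul]
      _ = Pflip n * (R1⁻¹ * Pflip n) := by rw [h2']
      _ = flip21 R1⁻¹ := by rw [hconj R1⁻¹, mul_assoc]
  refine ⟨key, ?_⟩
  have hσinj : Function.Injective σ := σ.injective
  calc QYBE R1 ↔ QYBE (flip21 R1⁻¹) := (qybe_flip_inv_iff hR1).symm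
    _ ↔ QYBE S := by rw [key]
    _ ↔ QYBE R2.transpose := qybe_map_iff σ hσinj
    _ ↔ QYBE R2 := qybe_transpose_iff
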